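/- For every real number x > 1 and every real number a with 0 < a ≤ 1/4, one has ∑_{k=1}^∞ x^{−2k}/(2k − a)² ≤ 16·∑_{k=1}^∞ x^{−2k}/(8k − 1)² ≤ 0.337/√(x⁴ − 1). -/

import Mathlib

set_option maxHeartbeats 2000000

/-- For real `x > 1` and `0 < a ≤ 1/4`:
`∑_{k=1}^∞ x^(-2k)/(2k - a)² ≤ 16 ∑_{k=1}^∞ x^(-2k)/(8k - 1)² ≤ 0.337/√(x⁴ - 1)`. -/
theorem trivial_zero_sum_bound (x a : ℝ) (hx : 1 < x) (ha₀ : 0 < a) (ha₁ : a ≤ 1 / 4) :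
    (∑' k : ℕ, 1 / x ^ (2 * (k + 1)) / (2 * ((k : ℝ) + 1) - a) ^ 2 ≤
        16 * ∑' k : ℕ, 1 / x ^ (2 * (k + 1)) / (8 * ((k : ℝ) + 1) - 1) ^ 2) ∧
      16 * ∑' k : ℕ, 1 / x ^ (2 * (k + 1)) / (8 * ((k : ℝ) + 1) - 1) ^ 2 ≤
        0.337 / Real.sqrt (x ^ 4 - 1) := by
  have hx0 : 0 < x := lt_trans one_pos hx
  have hx2 : (1:ℝ) < x ^ 2 := by nlinarith
  set q : ℝ := (x ^ 2)⁻¹ with hq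
  have hq0 : 0 < q := by positivity
  have hq1 : q < 1 := inv_lt_one_of_one_lt₀ hx2
  have hqx : q * x ^ 2 = 1 := inv_mul_cancel₀ (by positivity)
  have hpow : ∀ k : ℕ, 1 / x ^ (2 * (k + 1)) = q ^ (k + 1) := by
    intro k
    rw [pow_mul, one_div, ← inv_pow]
  have hgeo : Summable (fun k : ℕ => q ^ (k + 1)) :=
    (summable_nat_add_iff 1).2 (summable_geometric_of_lt_one hq0.le hq1)
  -- summability of the two series
  have hg : Summable (fun k : ℕ => 1 / x ^ (2 * (k + 1)) / (8 * ((k : ℝ) + 1) - 1) ^ 2) := by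
    apply Summable.of_nonneg_of_le (fun k => by positivity) _ hgeo
    intro k
    rw [hpow k]
    have hk : (0:ℝ) ≤ (k : ℝ) := Nat.cast_nonneg k
    have h1 : (1:ℝ) ≤ (8 * ((k : ℝ) + 1) - 1) ^ 2 := by nlinarith
    exact div_le_self (by positivity) h1
  have hf : Summable (fun k : ℕ => 1 / x ^ (2 * (k + 1)) / (2 * ((k : ℝ) + 1) - a) ^ 2) := by
    apply Summable.of_nonneg_of_le _ _ hgeo
    · intro k
      have hk : (0:ℝ) ≤ (k : ℝ) := Nat.cast_nonneg k
      have hd : (0:ℝ) < 2 * ((k : ℝ) + 1) - a := by nlinarith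
      positivity
    · intro k
      rw [hpow k]
      have hk : (0:ℝ) ≤ (k : ℝ) := Nat.cast_nonneg k
      have h1 : (1:ℝ) ≤ (2 * ((k : ℝ) + 1) - a) ^ 2 := by nlinarith
      exact div_le_self (by positivity) h1
  constructor
  · rw [← tsum_mul_left]
    apply Summable.tsum_le_tsum _ hf (hg.mul_left 16)
    intro k
    have hk : (0:ℝ) ≤ (k : ℝ) := Nat.cast_nonneg k
    have hX : 0 < x ^ (2 * (k + 1)) := by positivity
    have hd1 : (0:ℝ) < 2 * ((k : ℝ) + 1) - a := by nlinarith
    have hd2 : (0:ℝ) < 8 * ((k : ℝ) + 1) - 1 := by nlinarith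
    rw [mul_div_assoc']
    rw [div_le_div_iff₀ (by positivity) (by positivity)]
    have key : (8 * ((k : ℝ) + 1) - 1) ^ 2 ≤ 16 * (2 * ((k : ℝ) + 1) - a) ^ 2 := by nlinarith
    have hN : (0:ℝ) ≤ 1 / x ^ (2 * (k + 1)) := by positivity
    nlinarith [mul_le_mul_of_nonneg_left key hN]
  · -- second inequality
    have h4 : (0:ℝ) < x ^ 4 - 1 := by nlinarith
    have hs0 : 0 < Real.sqrt (x ^ 4 - 1) := Real.sqrt_pos.2 h4
    rw [le_div_iff₀ hs0]
    -- bound on sqrt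
    have hhalf : (0:ℝ) < 1 - q ^ 2 / 2 := by nlinarith
    have hsq : Real.sqrt (x ^ 4 - 1) ≤ (1 - q ^ 2 / 2) / q := by
      have h1 : x ^ 4 - 1 ≤ ((1 - q ^ 2 / 2) / q) ^ 2 := by
        rw [div_pow, le_div_iff₀ (by positivity)]
        have hq4 : q ^ 2 * x ^ 4 = 1 := by nlinarith [hqx]
        nlinarith [sq_nonneg (q ^ 2), hq4]
      calc Real.sqrt (x ^ 4 - 1) ≤ Real.sqrt (((1 - q ^ 2 / 2) / q) ^ 2) :=
            Real.sqrt_le_sqrt h1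
        _ = (1 - q ^ 2 / 2) / q := Real.sqrt_sq (by positivity)
    -- bound on the sum
    set B : ℝ := q / 49 + q ^ 2 / 225 + q ^ 3 / 529 + q ^ 4 / 961 + q ^ 5 / 280 with hB
    have hS : (∑' k : ℕ, 1 / x ^ (2 * (k + 1)) / (8 * ((k : ℝ) + 1) - 1) ^ 2) ≤ B := by
      rw [← Summable.sum_add_tsum_nat_add 4 hg]
      have head : (∑ k ∈ Finset.range 4, 1 / x ^ (2 * (k + 1)) / (8 * ((k : ℝ) + 1) - 1) ^ 2)
          = q / 49 + q ^ 2 / 225 + q ^ 3 / 529 + q ^ 4 / 961 := by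
        simp [Finset.sum_range_succ, hpow]
        norm_num
      have tail : (∑' i : ℕ, 1 / x ^ (2 * ((i + 4) + 1)) / (8 * (((i + 4 : ℕ) : ℝ) + 1) - 1) ^ 2)
          ≤ q ^ 5 / 280 := by
        apply Real.tsum_le_of_sum_range_le (fun i => by positivity)
        intro n
        set t : ℕ → ℝ := fun i => q ^ 5 / 8 * (8 * (i : ℝ) + 35)⁻¹ with ht
        have step : ∀ i : ℕ, 1 / x ^ (2 * ((i + 4) + 1)) / (8 * (((i + 4 : ℕ) : ℝ) + 1) - 1) ^ 2
            ≤ t i - t (i + 1) := by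
          intro i
          have hi : (0:ℝ) ≤ (i : ℝ) := Nat.cast_nonneg i
          rw [hpow (i + 4)]
          push_cast
          have hqp : q ^ (i + 4 + 1) ≤ q ^ 5 :=
            pow_le_pow_of_le_one hq0.le hq1.le (by omega)
          have hd : (0:ℝ) < (8 * ((i:ℝ) + 4 + 1) - 1) ^ 2 := by nlinarith
          have e1 : t i - t (i + 1) = q ^ 5 / ((8 * (i:ℝ) + 35) * (8 * (i:ℝ) + 43)) := by
            rw [ht]
            push_cast
            field_simp
            ring
          rw [e1]
          rw [div_le_div_iff₀ hd (by positivity)]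
          nlinarith [mul_le_mul_of_nonneg_left hqp (le_of_lt (show (0:ℝ) < (8*(i:ℝ)+35)*(8*(i:ℝ)+43) by positivity)), pow_nonneg hq0.le 5, hi]
        calc (∑ i ∈ Finset.range n, 1 / x ^ (2 * ((i + 4) + 1)) / (8 * (((i + 4 : ℕ) : ℝ) + 1) - 1) ^ 2)
            ≤ ∑ i ∈ Finset.range n, (t i - t (i + 1)) := Finset.sum_le_sum (fun i _ => step i)
          _ = t 0 - t n := Finset.sum_range_sub' t n
          _ ≤ t 0 := by
              have : 0 ≤ t n := by rw [ht]; positivity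
              linarith
          _ = q ^ 5 / 280 := by rw [ht]; push_cast; ring_nf
      rw [head, hB]
      linarith [tail]
    have hBpos : 0 < B := by rw [hB]; positivity
    have poly : 16 * (1/49 + q/225 + q^2/529 + q^3/961 + q^4/280) * (1 - q^2/2) ≤ 337/1000 := by
      nlinarith [sq_nonneg (q - 27/100), sq_nonneg q, sq_nonneg (q-1), mul_nonneg hq0.le hq0.le,
        sq_nonneg (q^2 - 27/100*q), mul_nonneg (mul_nonneg hq0.le hq0.le) hq0.le, sq_nonneg (q^2-1),
        mul_nonneg (sub_nonneg.2 hq1.le) hq0.le]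
    calc 16 * (∑' k : ℕ, 1 / x ^ (2 * (k + 1)) / (8 * ((k : ℝ) + 1) - 1) ^ 2) * Real.sqrt (x ^ 4 - 1)
        ≤ 16 * B * Real.sqrt (x ^ 4 - 1) := by
          apply mul_le_mul_of_nonneg_right _ hs0.le
          linarith [hS]
      _ ≤ 16 * B * ((1 - q ^ 2 / 2) / q) := by
          apply mul_le_mul_of_nonneg_left hsq (by positivity)
      _ = 16 * (1/49 + q/225 + q^2/529 + q^3/961 + q^4/280) * (1 - q^2/2) := by
          rw [hB]; field_simp
      _ ≤ 0.337 := by norm_num [poly]
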